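/- Fix an integer k ≥ 2 and λ ∈ ℝ^k with λ₁+⋯+λ_k = 0. Let δ = ((k−1)/2, (k−3)/2, …, −(k−1)/2) ∈ ℝ^k (so δ_i = (k+1−2i)/2), and for 1 ≤ j ≤ k−1 let ω_j ∈ ℝ^k be the vector with first j coordinates (k−j)/k and last k−j coordinates −j/k. Set H = {β ∈ ℝ^k : β₁+⋯+β_k = 0}. Then the collection of subsets of H of the form {β ∈ H : ⟨σ·(λ+δ) − (ψ·β + δ), θ·ω_j⟩ = 0}, as σ, ψ, θ range over S_k and j ranges over 1 ≤ j ≤ k−1 (⟨·,·⟩ the standard inner product), is equal to the collection of subsets of H of the form {β ∈ H : Σ_{u∈U} β_u = Σ_{v∈V} λ_v + Σ_{v∈V} δ_v − Σ_{w∈W} δ_w}, as j ranges over 1 ≤ j ≤ ⌊k/2⌋ and U, V, W range over all j-element subsets of {1,…,k}. (The hyperplanes of the Kostant arrangements for λ are exactly those given by these subset equations.) -/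

import Mathlib

open Finset

lemma sum_slDelta' (k : ℕ) : ∑ i : Fin k, ((k : ℝ) - 1 - 2 * i.1) / 2 = 0 := by
  rcases Nat.eq_zero_or_pos k with h | h
  · subst h; simp
  have h1 : ∑ i : Fin k, ((i.1 : ℝ)) = (k * (k - 1)) / 2 := by
    rw [Fin.sum_univ_eq_sum_range (fun i => (i : ℝ)) k]
    have := Finset.sum_range_id_mul_two k
    have h2 : ((∑ i ∈ Finset.range k, i : ℕ) : ℝ) * 2 = (k : ℝ) * ((k : ℝ) - 1) := by
      have h3 := congrArg (Nat.cast : ℕ → ℝ) this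
      push_cast [Nat.cast_sub h] at h3 ⊢
      linarith
    push_cast at h2 ⊢
    linarith
  rw [← Finset.sum_div, Finset.sum_sub_distrib, Finset.sum_sub_distrib, ← Finset.mul_sum, h1]
  simp
  ring

lemma exists_perm_mem_iff {α : Type*} [Fintype α] [DecidableEq α] (s t : Finset α)
    (h : s.card = t.card) : ∃ π : Equiv.Perm α, ∀ x, x ∈ s ↔ π x ∈ t := by
  have hc : sᶜ.card = tᶜ.card := by
    simp [Finset.card_compl, h]
  let e1 : {x // x ∈ s} ≃ {x // x ∈ t} := Finset.equivOfCardEq h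
  let e2 : {x // ¬ x ∈ s} ≃ {x // ¬ x ∈ t} :=
    ((Equiv.subtypeEquivRight (fun x => (Finset.mem_compl (s := s)).symm)).trans
      (Finset.equivOfCardEq hc)).trans
      (Equiv.subtypeEquivRight (fun x => (Finset.mem_compl (s := t))))
  refine ⟨Equiv.subtypeCongr e1 e2, fun x => ?_⟩
  by_cases hx : x ∈ s
  · simp only [hx, true_iff]
    have : Equiv.subtypeCongr e1 e2 x = (e1 ⟨x, hx⟩ : α) := by
      simp [Equiv.subtypeCongr, Equiv.sumCompl_symm_apply_of_pos (p := Membership.mem s) hx]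
    rw [this]; exact (e1 ⟨x, hx⟩).2
  · simp only [hx, false_iff]
    have : Equiv.subtypeCongr e1 e2 x = (e2 ⟨x, hx⟩ : α) := by
      simp [Equiv.subtypeCongr, Equiv.sumCompl_symm_apply_of_neg (p := Membership.mem s) hx]
    rw [this]; exact (e2 ⟨x, hx⟩).2


/-- Half the sum of the positive roots of `sl_k`: `δ_i = (k+1-2i)/2` (1-based), i.e.
`δ i = (k - 1 - 2i)/2` for the 0-based index `i : Fin k`. -/
noncomputable def slDelta (k : ℕ) : Fin k → ℝ := fun i => ((k : ℝ) - 1 - 2 * i.1) / 2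

/-- The fundamental weight `ω_j` of `sl_k`: first `j` coordinates `(k-j)/k`,
last `k-j` coordinates `-j/k`. -/
noncomputable def slOmega (k j : ℕ) : Fin k → ℝ :=
  fun i => if i.1 < j then ((k : ℝ) - j) / k else -(j : ℝ) / k

lemma sum_slDelta (k : ℕ) : ∑ i : Fin k, slDelta k i = 0 := sum_slDelta' k

lemma card_filter_lt (k j : ℕ) (hj : j ≤ k) :
    (Finset.univ.filter (fun i : Fin k => i.1 < j)).card = j := by
  have : Finset.univ.filter (fun i : Fin k => i.1 < j)
      = (Finset.univ : Finset (Fin j)).map (Fin.castLEEmb hj) := by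
    ext i
    simp only [Finset.mem_filter, Finset.mem_univ, true_and, Finset.mem_map, Fin.castLEEmb,
      Function.Embedding.coeFn_mk]
    constructor
    · intro h; exact ⟨⟨i.1, h⟩, Fin.ext rfl⟩
    · rintro ⟨a, ha, rfl⟩; exact a.2
  rw [this, Finset.card_map, Finset.card_univ, Fintype.card_fin]

lemma map_inv_eq {α : Type*} [Fintype α] [DecidableEq α] {s t : Finset α} (π : Equiv.Perm α)
    (h : ∀ x, x ∈ s ↔ π x ∈ t) : t.map π⁻¹.toEmbedding = s := by
  ext x
  simp only [Finset.mem_map, Equiv.coe_toEmbedding]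
  constructor
  · rintro ⟨w, hw, rfl⟩
    rw [h]
    simpa using hw
  · intro hx
    exact ⟨π x, (h x).mp hx, by simp⟩

lemma omega_sum (k j : ℕ) (hk : k ≠ 0) (θ : Equiv.Perm (Fin k)) (f : Fin k → ℝ) :
    ∑ i, f i * slOmega k j (θ⁻¹ i)
      = (∑ i ∈ Finset.univ.filter (fun i => (θ⁻¹ i).1 < j), f i)
        - ((j : ℝ) / k) * ∑ i, f i := by
  have hk' : (k : ℝ) ≠ 0 := Nat.cast_ne_zero.mpr hk
  have key : ∀ i, f i * slOmega k j (θ⁻¹ i)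
      = (if (θ⁻¹ i).1 < j then f i else 0) - ((j : ℝ)/k) * f i := by
    intro i
    by_cases h : (θ⁻¹ i).1 < j
    · simp only [slOmega, if_pos h]
      field_simp
    · simp only [slOmega, if_neg h]
      ring
  rw [Finset.sum_congr rfl (fun i _ => key i), Finset.sum_sub_distrib, ← Finset.mul_sum,
    ← Finset.sum_filter]

lemma key_iff (k j : ℕ) (hk : 2 ≤ k) (lam : Fin k → ℝ) (hsum : (∑ i, lam i) = 0)
    (σ ψ θ : Equiv.Perm (Fin k)) (β : Fin k → ℝ) (hβ : (∑ i, β i) = 0) :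
    (∑ i, ((lam (σ⁻¹ i) + slDelta k (σ⁻¹ i)) - (β (ψ⁻¹ i) + slDelta k i))
        * slOmega k j (θ⁻¹ i)) = 0
      ↔ (∑ u ∈ (Finset.univ.filter (fun i => (θ⁻¹ i).1 < j)).map ψ⁻¹.toEmbedding, β u)
          = (∑ v ∈ (Finset.univ.filter (fun i => (θ⁻¹ i).1 < j)).map σ⁻¹.toEmbedding, lam v)
            + (∑ v ∈ (Finset.univ.filter (fun i => (θ⁻¹ i).1 < j)).map σ⁻¹.toEmbedding, slDelta k v)
            - ∑ w ∈ Finset.univ.filter (fun i => (θ⁻¹ i).1 < j), slDelta k w := by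
  have hk0 : k ≠ 0 := by omega
  set W := Finset.univ.filter (fun i => (θ⁻¹ i).1 < j) with hW
  rw [omega_sum k j hk0 θ]
  have htot : (∑ i, ((lam (σ⁻¹ i) + slDelta k (σ⁻¹ i)) - (β (ψ⁻¹ i) + slDelta k i))) = 0 := by
    rw [Finset.sum_sub_distrib, Finset.sum_add_distrib, Finset.sum_add_distrib,
      Equiv.sum_comp σ⁻¹ lam, Equiv.sum_comp σ⁻¹ (slDelta k), Equiv.sum_comp ψ⁻¹ β,
      hsum, sum_slDelta, hβ]
    ring
  rw [htot, mul_zero, sub_zero]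
  rw [Finset.sum_sub_distrib, Finset.sum_add_distrib, Finset.sum_add_distrib]
  rw [show (∑ i ∈ W, lam (σ⁻¹ i)) = ∑ v ∈ W.map σ⁻¹.toEmbedding, lam v from
    (Finset.sum_map W σ⁻¹.toEmbedding lam).symm]
  rw [show (∑ i ∈ W, slDelta k (σ⁻¹ i)) = ∑ v ∈ W.map σ⁻¹.toEmbedding, slDelta k v from
    (Finset.sum_map W σ⁻¹.toEmbedding (slDelta k)).symm]
  rw [show (∑ i ∈ W, β (ψ⁻¹ i)) = ∑ u ∈ W.map ψ⁻¹.toEmbedding, β u from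
    (Finset.sum_map W ψ⁻¹.toEmbedding β).symm]
  constructor <;> intro h <;> linarith

lemma compl_iff (k : ℕ) (lam : Fin k → ℝ) (hsum : (∑ i, lam i) = 0)
    (U V W : Finset (Fin k)) (β : Fin k → ℝ) (hβ : (∑ i, β i) = 0) :
    ((∑ u ∈ U, β u) = (∑ v ∈ V, lam v) + (∑ v ∈ V, slDelta k v) - ∑ w ∈ W, slDelta k w)
      ↔ ((∑ u ∈ Uᶜ, β u)
          = (∑ v ∈ Vᶜ, lam v) + (∑ v ∈ Vᶜ, slDelta k v) - ∑ w ∈ Wᶜ, slDelta k w) := by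
  have h1 := Finset.sum_compl_add_sum U β
  have h2 := Finset.sum_compl_add_sum V lam
  have h3 := Finset.sum_compl_add_sum V (slDelta k)
  have h4 := Finset.sum_compl_add_sum W (slDelta k)
  have h5 := sum_slDelta k
  rw [hβ] at h1
  rw [hsum] at h2
  rw [h5] at h3 h4
  constructor <;> intro h <;> linarith


theorem kostant_arrangement_hyperplanes (k : ℕ) (hk : 2 ≤ k)
    (lam : Fin k → ℝ) (hsum : (∑ i, lam i) = 0) :
    {S : Set (Fin k → ℝ) |
        ∃ (σ ψ θ : Equiv.Perm (Fin k)) (j : ℕ), 1 ≤ j ∧ j ≤ k - 1 ∧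
          S = {β | (∑ i, β i) = 0 ∧
            (∑ i, ((lam (σ⁻¹ i) + slDelta k (σ⁻¹ i)) - (β (ψ⁻¹ i) + slDelta k i))
                * slOmega k j (θ⁻¹ i)) = 0}}
      = {S : Set (Fin k → ℝ) |
          ∃ (j : ℕ) (U V W : Finset (Fin k)), 1 ≤ j ∧ j ≤ k / 2 ∧
            U.card = j ∧ V.card = j ∧ W.card = j ∧
            S = {β | (∑ i, β i) = 0 ∧
              (∑ u ∈ U, β u)
                = (∑ v ∈ V, lam v) + (∑ v ∈ V, slDelta k v) - ∑ w ∈ W, slDelta k w}} := by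
  ext S
  simp only [Set.mem_setOf_eq]
  constructor
  · rintro ⟨σ, ψ, θ, j, hj1, hj2, rfl⟩
    set W := Finset.univ.filter (fun i => (θ⁻¹ i).1 < j) with hWdef
    have hWc : W.card = j := by
      have hmap : W = (Finset.univ.filter (fun i : Fin k => i.1 < j)).map θ.toEmbedding := by
        ext x
        simp only [hWdef, Finset.mem_map, Finset.mem_filter, Finset.mem_univ, true_and,
          Equiv.coe_toEmbedding]
        constructor
        · intro h; exact ⟨θ⁻¹ x, h, by simp⟩
        · rintro ⟨a, ha, rfl⟩; simpa using ha
      rw [hmap, Finset.card_map, card_filter_lt k j (by omega)]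
    have hSet : {β : Fin k → ℝ | (∑ i, β i) = 0 ∧
            (∑ i, ((lam (σ⁻¹ i) + slDelta k (σ⁻¹ i)) - (β (ψ⁻¹ i) + slDelta k i))
                * slOmega k j (θ⁻¹ i)) = 0}
        = {β | (∑ i, β i) = 0 ∧
            (∑ u ∈ W.map ψ⁻¹.toEmbedding, β u)
              = (∑ v ∈ W.map σ⁻¹.toEmbedding, lam v)
                + (∑ v ∈ W.map σ⁻¹.toEmbedding, slDelta k v) - ∑ w ∈ W, slDelta k w} := by
      ext β
      exact and_congr_right fun h0 => key_iff k j hk lam hsum σ ψ θ β h0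
    by_cases hcase : j ≤ k / 2
    · exact ⟨j, W.map ψ⁻¹.toEmbedding, W.map σ⁻¹.toEmbedding, W, hj1, hcase,
        by rw [Finset.card_map, hWc], by rw [Finset.card_map, hWc], hWc, hSet⟩
    · refine ⟨k - j, (W.map ψ⁻¹.toEmbedding)ᶜ, (W.map σ⁻¹.toEmbedding)ᶜ, Wᶜ,
        by omega, by omega, ?_, ?_, ?_, ?_⟩
      · rw [Finset.card_compl, Finset.card_map, hWc, Fintype.card_fin]
      · rw [Finset.card_compl, Finset.card_map, hWc, Fintype.card_fin]
      · rw [Finset.card_compl, hWc, Fintype.card_fin]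
      · rw [hSet]
        ext β
        exact and_congr_right fun h0 =>
          compl_iff k lam hsum (W.map ψ⁻¹.toEmbedding) (W.map σ⁻¹.toEmbedding) W β h0
  · rintro ⟨j, U, V, W, hj1, hj2, hU, hV, hW, rfl⟩
    have hjk : j ≤ k - 1 := by omega
    have hJ : (Finset.univ.filter (fun i : Fin k => i.1 < j)).card = j :=
      card_filter_lt k j (by omega)
    obtain ⟨θ, hθ⟩ := exists_perm_mem_iff _ W (hJ.trans hW.symm)
    obtain ⟨σ, hσ⟩ := exists_perm_mem_iff V W (hV.trans hW.symm)
    obtain ⟨ψ, hψ⟩ := exists_perm_mem_iff U W (hU.trans hW.symm)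
    refine ⟨σ, ψ, θ, j, hj1, hjk, ?_⟩
    have hWeq : Finset.univ.filter (fun i : Fin k => (θ⁻¹ i).1 < j) = W := by
      ext i
      simp only [Finset.mem_filter, Finset.mem_univ, true_and]
      constructor
      · intro h
        have h1 : θ⁻¹ i ∈ Finset.univ.filter (fun i : Fin k => i.1 < j) := by
          simpa using h
        have := (hθ _).mp h1
        simpa using this
      · intro h
        have h1 : θ (θ⁻¹ i) ∈ W := by simpa using h
        have := (hθ (θ⁻¹ i)).mpr h1
        simpa using this
    have hUeq : W.map ψ⁻¹.toEmbedding = U := map_inv_eq ψ hψ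
    have hVeq : W.map σ⁻¹.toEmbedding = V := map_inv_eq σ hσ
    ext β
    refine and_congr_right fun h0 => ?_
    rw [key_iff k j hk lam hsum σ ψ θ β h0, hWeq, hUeq, hVeq]
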